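/- Let {a_s + n_s ℤ}_{s=1}^k be a disjoint cover of ℤ. For every nonempty proper subset J of {1,…,k} there exists a subset I of {1,…,k} with I ≠ J such that ∑_{s∈I} 1/n_s = ∑_{s∈J} 1/n_s. -/

import Mathlib

open Finset Polynomial Complex Real

lemma count_res (N nn : ℕ) (a : ℤ) (hn : 0 < nn) (hd : nn ∣ N) :
    ((Finset.range N).filter (fun x : ℕ => (nn:ℤ) ∣ (x:ℤ) - a)).card = N / nn := by
  have hnZ : (nn:ℤ) ≠ 0 := by exact_mod_cast hn.ne'
  have h1' : 0 ≤ a % nn := Int.emod_nonneg a hnZ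
  have h2' : a % nn < nn := Int.emod_lt_of_pos a (by exact_mod_cast hn)
  have h1 : ((a % nn).toNat : ℤ) = a % nn := Int.toNat_of_nonneg h1'
  have hr : (a % nn).toNat < nn := by omega
  have hmodx : ∀ x : ℕ, (nn:ℤ) ∣ (x:ℤ) - a → x % nn = (a % nn).toNat := by
    intro x hx
    have hxa : (x:ℤ) % nn = a % nn := by
      rw [Int.emod_eq_emod_iff_emod_sub_eq_zero]; exact Int.emod_eq_zero_of_dvd hx
    have : ((x % nn : ℕ) : ℤ) = ((a % nn).toNat : ℤ) := by
      push_cast; rw [hxa, h1]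
    exact_mod_cast this
  rw [← Finset.card_range (N / nn)]
  apply Finset.card_bij' (fun x _ => x / nn) (fun y _ => (a % nn).toNat + nn * y)
  · intro x hx
    simp only [Finset.mem_filter, Finset.mem_range] at hx
    exact Finset.mem_range.mpr (Nat.div_lt_div_of_lt_of_dvd hd hx.1)
  · intro y hy
    simp only [Finset.mem_range] at hy
    simp only [Finset.mem_filter, Finset.mem_range]
    constructor
    · have : nn * y + nn ≤ N := by
        calc nn * y + nn = nn * (y+1) := by ring
          _ ≤ nn * (N / nn) := Nat.mul_le_mul_left _ hy
          _ = N := Nat.mul_div_cancel' hd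
      omega
    · have heq : ((a % nn).toNat : ℤ) + (nn:ℤ) * y - a = nn * (y - a / nn) := by
        rw [h1]
        have := Int.emod_add_mul_ediv a nn
        ring_nf
        linarith
      refine ⟨y - a / nn, ?_⟩
      push_cast
      linarith [heq]
  · intro x hx
    simp only [Finset.mem_filter, Finset.mem_range] at hx
    have := hmodx x hx.2
    have := Nat.mod_add_div x nn
    omega
  · intro y hy
    rw [Nat.add_mul_div_left _ _ hn, Nat.div_eq_of_lt hr]
    omega

lemma exp_inj_aux (N : ℕ) (hN : 0 < N) (x y : ℕ) (hx : x < N) (hy : y < N)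
    (h : Complex.exp (2*π*Complex.I*x/N) = Complex.exp (2*π*Complex.I*y/N)) : x = y := by
  rw [Complex.exp_eq_exp_iff_exists_int] at h
  obtain ⟨d, hd⟩ := h
  have hNne : (N:ℂ) ≠ 0 := by exact_mod_cast hN.ne'
  have hpi : (2*(π:ℂ)*Complex.I) ≠ 0 := by
    simp [Real.pi_ne_zero, Complex.I_ne_zero]
  field_simp at hd
  have h2 : (2*(π:ℂ)*Complex.I) * x = (2*(π:ℂ)*Complex.I) * (y + d*N) := by linear_combination (2*(π:ℂ)*Complex.I) * hd
  have h3 : (x:ℂ) = y + d*N := mul_left_cancel₀ hpi h2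
  have h4 : (x:ℤ) = y + d*N := by exact_mod_cast h3
  have hxZ : (x:ℤ) < N := by exact_mod_cast hx
  have hyZ : (y:ℤ) < N := by exact_mod_cast hy
  have hx0 : (0:ℤ) ≤ x := Int.ofNat_nonneg x
  have hy0 : (0:ℤ) ≤ y := Int.ofNat_nonneg y
  have hN0 : (0:ℤ) < N := by exact_mod_cast hN
  have hd0 : d = 0 := by
    rcases lt_trichotomy d 0 with h|h|h
    · have := mul_le_mul_of_nonneg_right (by omega : d ≤ -1) hN0.le
      linarith
    · exact h
    · have := mul_le_mul_of_nonneg_right (by omega : (1:ℤ) ≤ d) hN0.le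
      linarith
  rw [hd0] at h4
  simp at h4
  exact_mod_cast h4

lemma root_exp_aux (N ns ms : ℕ) (hns : 0 < ns) (hms : 0 < ms) (hmn : ms * ns = N)
    (x : ℕ) (aa d : ℤ) (hd : (x:ℤ) - aa = ns * d) :
    (Complex.exp (2*π*Complex.I*x/N)) ^ ms = Complex.exp (2*π*Complex.I*aa/ns) := by
  rw [← Complex.exp_nat_mul]
  rw [Complex.exp_eq_exp_iff_exists_int]
  refine ⟨d, ?_⟩
  have hnsne : (ns:ℂ) ≠ 0 := by exact_mod_cast hns.ne'
  have hmsne : (ms:ℂ) ≠ 0 := by exact_mod_cast hms.ne'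
  have hmnC : (ms:ℂ) * ns = N := by exact_mod_cast hmn
  have hdC : (x:ℂ) - aa = ns * d := by exact_mod_cast hd
  rw [← hmnC]
  field_simp
  linear_combination hdC

theorem stmt_2 (k : ℕ) (a : Fin k → ℤ) (n : Fin k → ℕ) (hn : ∀ s, 0 < n s)
    (hcover : ∀ x : ℤ, ∃! s : Fin k, (n s : ℤ) ∣ x - a s)
    (J : Finset (Fin k)) (hJne : J.Nonempty) (hJprop : J ≠ Finset.univ) :
    ∃ I : Finset (Fin k), I ≠ J ∧
      ∑ s ∈ I, (1 : ℚ) / n s = ∑ s ∈ J, (1 : ℚ) / n s := by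
  classical
  by_contra hcon
  push_neg at hcon
  set N := Finset.univ.lcm n with hNdef
  have hdvd : ∀ s, n s ∣ N := fun s => Finset.dvd_lcm (Finset.mem_univ s)
  have hNpos : 0 < N := by
    rcases Nat.eq_zero_or_pos N with h | h
    · exfalso
      rw [hNdef] at h
      have := Finset.lcm_eq_zero_iff.mp h
      obtain ⟨s, -, hs⟩ := this
      exact (hn s).ne' hs
    · exact h
  set m : Fin k → ℕ := fun s => N / n s with hmdef
  have hmn : ∀ s, m s * n s = N := fun s => Nat.div_mul_cancel (hdvd s)
  have hm0 : ∀ s, 0 < m s := fun s => Nat.div_pos (Nat.le_of_dvd hNpos (hdvd s)) (hn s)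
  -- total measure
  have hsum : ∑ s, m s = N := by
    have key : ∀ s : Fin k,
        ((Finset.range N).filter (fun x : ℕ => (n s:ℤ) ∣ (x:ℤ) - a s)).card = m s :=
      fun s => count_res N (n s) (a s) (hn s) (hdvd s)
    have hfib := Finset.card_eq_sum_card_fiberwise
      (f := fun x : ℕ => (hcover (x:ℤ)).choose) (s := Finset.range N) (t := Finset.univ)
      (fun x _ => Finset.mem_univ _)
    rw [Finset.card_range] at hfib
    rw [hfib]
    apply Finset.sum_congr rfl
    intro s _
    rw [← key s]
    congr 1
    apply Finset.filter_congr
    intro x _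
    constructor
    · intro h
      exact ((hcover (x:ℤ)).choose_spec.2 s h).symm
    · intro h
      rw [← h]
      exact (hcover (x:ℤ)).choose_spec.1
  set ζ : Fin k → ℂ := fun s => Complex.exp (2*π*Complex.I*(a s)/(n s)) with hζdef
  have hζne : ∀ s, ζ s ≠ 0 := fun s => Complex.exp_ne_zero _
  set H : Polynomial ℂ := ∏ s, (X ^ m s - C (ζ s)) with hHdef
  have Hmonic : H.Monic :=
    monic_prod_of_monic _ _ (fun s _ => monic_X_pow_sub_C _ (hm0 s).ne')
  have hdegH : H.natDegree = N := by
    rw [hHdef, natDegree_prod _ _ (fun s _ => (monic_X_pow_sub_C (ζ s) (hm0 s).ne').ne_zero)]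
    simp only [natDegree_X_pow_sub_C]
    exact hsum
  have hdegH' : H.degree = (N : WithBot ℕ) := by
    rw [degree_eq_natDegree Hmonic.ne_zero, hdegH]
  -- root set
  set S : Finset ℂ := (Finset.range N).image (fun x : ℕ => Complex.exp (2*π*Complex.I*x/N))
    with hSdef
  have hScard : S.card = N := by
    rw [hSdef, Finset.card_image_of_injOn, Finset.card_range]
    intro x hx y hy hxy
    exact exp_inj_aux N hNpos x y (Finset.mem_range.mp hx) (Finset.mem_range.mp hy) hxy
  have heval : ∀ v ∈ S, (H - (X^N - C 1)).eval v = 0 := by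
    intro v hv
    rw [hSdef, Finset.mem_image] at hv
    obtain ⟨x, hx, rfl⟩ := hv
    have h1 : H.eval (Complex.exp (2*π*Complex.I*x/N)) = 0 := by
      obtain ⟨s, hs, -⟩ := hcover (x:ℤ)
      rw [hHdef, eval_prod]
      apply Finset.prod_eq_zero (Finset.mem_univ s)
      rw [eval_sub, eval_pow, eval_X, eval_C, sub_eq_zero]
      obtain ⟨d, hd⟩ := hs
      exact root_exp_aux N (n s) (m s) (hn s) (hm0 s) (hmn s) x (a s) d hd
    have h2 : (Complex.exp (2*π*Complex.I*x/N)) ^ N = 1 := by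
      rw [← Complex.exp_nat_mul]
      have hNne : (N:ℂ) ≠ 0 := by exact_mod_cast hNpos.ne'
      have : (N:ℂ) * (2*π*Complex.I*x/N) = (x:ℤ) * (2*π*Complex.I) := by
        push_cast
        field_simp
      rw [this, Complex.exp_int_mul_two_pi_mul_I]
    rw [eval_sub, eval_sub, eval_pow, eval_X, eval_C, h1, h2]
    ring
  -- H = X^N - 1
  have hP : H = X^N - C 1 := by
    by_contra hne
    have hsub : H - (X^N - C 1) ≠ 0 := sub_ne_zero.mpr hne
    have hlead : H.leadingCoeff = (X^N - C (1:ℂ)).leadingCoeff := by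
      rw [Hmonic.leadingCoeff, (monic_X_pow_sub_C (1:ℂ) hNpos.ne').leadingCoeff]
    have hlt : (H - (X^N - C 1)).degree < (N : WithBot ℕ) := by
      have := degree_sub_lt (hdegH'.trans (degree_X_pow_sub_C hNpos (1:ℂ)).symm)
        Hmonic.ne_zero hlead
      rwa [hdegH'] at this
    have hnat : (H - (X^N - C 1)).natDegree < N :=
      (natDegree_lt_iff_degree_lt hsub).mpr hlt
    exact hsub (eq_zero_of_natDegree_lt_card_of_eval_eq_zero' _ S heval
      (by rwa [hScard]))
  set M : ℕ := ∑ s ∈ J, m s with hMdef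
  have hM0 : 0 < M := by
    obtain ⟨s, hs⟩ := hJne
    exact Finset.sum_pos (fun i _ => hm0 i) ⟨s, hs⟩
  have hMN : M < N := by
    obtain ⟨t, ht⟩ := Finset.exists_of_ssubset (Finset.ssubset_univ_iff.mpr hJprop)
    have h1 : M < ∑ s, m s :=
      Finset.sum_lt_sum_of_subset (Finset.subset_univ J) (Finset.mem_univ t) ht.2 (hm0 t)
        (fun j _ _ => Nat.zero_le _)
    omega
  -- coefficient of X^M in H is 0
  have hHM : H.coeff M = 0 := by
    rw [hP, coeff_sub, coeff_X_pow, coeff_C]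
    simp [hMN.ne, hM0.ne']
  -- expansion of the coefficient
  have hexp : H.coeff M = ∑ t ∈ (Finset.univ : Finset (Fin k)).powerset,
      (if ∑ s ∈ t, m s = M then ∏ s ∈ Finset.univ \ t, (-ζ s) else 0) := by
    have hH2 : H = ∑ t ∈ (Finset.univ : Finset (Fin k)).powerset,
        X ^ (∑ s ∈ t, m s) * C (∏ s ∈ Finset.univ \ t, (-ζ s)) := by
      calc H = ∏ s, (X ^ m s + C (-ζ s)) := by
              rw [hHdef]; apply Finset.prod_congr rfl; intro s _; rw [map_neg, sub_eq_add_neg]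
        _ = ∑ t ∈ Finset.univ.powerset, (∏ s ∈ t, X ^ m s) * ∏ s ∈ Finset.univ \ t, C (-ζ s) :=
              Finset.prod_add _ _ _
        _ = _ := by
              apply Finset.sum_congr rfl
              intro t _
              rw [Finset.prod_pow_eq_pow_sum, map_prod]
    rw [hH2, finset_sum_coeff]
    apply Finset.sum_congr rfl
    intro t _
    rw [mul_comm, coeff_C_mul, coeff_X_pow]
    by_cases h : ∑ s ∈ t, m s = M
    · simp [h]
    · simp [h, Ne.symm h]
  -- the sum has a single nonzero term
  have hratio : ∀ I : Finset (Fin k), ∑ s ∈ I, (1:ℚ)/n s = (∑ s ∈ I, m s : ℚ) / N := by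
    intro I
    rw [Finset.sum_div]
    apply Finset.sum_congr rfl
    intro s _
    have hns : ((n s : ℚ)) ≠ 0 := by exact_mod_cast (hn s).ne'
    have hNq : ((N : ℚ)) ≠ 0 := by exact_mod_cast hNpos.ne'
    rw [div_eq_div_iff hns hNq, one_mul]
    exact_mod_cast (hmn s).symm
  have hsingle : ∑ t ∈ (Finset.univ : Finset (Fin k)).powerset,
      (if ∑ s ∈ t, m s = M then ∏ s ∈ Finset.univ \ t, (-ζ s) else 0)
      = ∏ s ∈ Finset.univ \ J, (-ζ s) := by
    rw [Finset.sum_eq_single_of_mem J (Finset.mem_powerset.mpr (Finset.subset_univ J))]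
    · simp [hMdef]
    · intro t _ htJ
      have hne : ∑ s ∈ t, m s ≠ M := by
        intro hEq
        apply hcon t htJ
        rw [hratio t, hratio J]
        congr 1
        exact_mod_cast hEq.trans hMdef
      simp [hne]
  have hzero : (0:ℂ) = ∏ s ∈ Finset.univ \ J, (-ζ s) := by
    rw [← hHM, hexp, hsingle]
  exact absurd hzero.symm (Finset.prod_ne_zero_iff.mpr
    (fun s _ => neg_ne_zero.mpr (hζne s)))
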